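/- arXiv:2412.05757 — 3 statements merged into one kernel-verified Lean document; each statement's English description precedes it below -/
import Mathlib

section
/- Let f : [0,∞) → [0,∞) be a nondecreasing continuous function with f(x) > 0 for all x > 0 and ∫₁^∞ dx/f(x) < ∞, and let F(x) = ∫ₓ^∞ dt/f(t) (the antiderivative of −1/f vanishing at +∞). Let y : [0,∞) → [0,∞) be continuous, let g : [0,∞) → [0,∞) be locally integrable, and let y₀ > 0 be such that y(t) ≤ y₀ + ∫₀ᵗ g(s) ds + ∫₀ᵗ f(y(s)) ds for all t ≥ 0. Then there exists a unique T* > 0 satisfying T* = F(y₀ + ∫₀^{T*} g(s) ds), and for every T < T* one has sup_{t ≤ T} y(t) ≤ F⁻¹( F(y₀ + ∫₀^T g(s) ds) − T ), where F⁻¹ denotes the inverse of the strictly decreasing function F on its range. -/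
open MeasureTheory Set
open Topology

/-- **Bihari's inequality.** If `f : [0,∞) → [0,∞)` is nondecreasing, continuous,
positive on `(0,∞)` with `∫₁^∞ dx / f x < ∞`, `F x = ∫ₓ^∞ dt / f t`, `y` is continuous
nonnegative, `g` is nonnegative and locally integrable, `y₀ > 0` and
`y t ≤ y₀ + ∫₀ᵗ g + ∫₀ᵗ f (y s) ds` for all `t ≥ 0`, then there is a unique `T* > 0` with
`T* = F (y₀ + ∫₀^{T*} g)`, and for `T < T*`, `sup_{t ≤ T} y t ≤ F⁻¹ (F (y₀ + ∫₀^T g) - T)`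
(the inverse value `z` being characterized by `F z = F (y₀ + ∫₀^T g) - T`, `z > 0`). -/
theorem bihari_inequality
    (f : ℝ → ℝ)
    (hf_mono : MonotoneOn f (Set.Ici 0))
    (hf_cont : ContinuousOn f (Set.Ici 0))
    (hf_nonneg : ∀ x, 0 ≤ x → 0 ≤ f x)
    (hf_pos : ∀ x, 0 < x → 0 < f x)
    (hf_int : IntegrableOn (fun x => 1 / f x) (Set.Ioi (1 : ℝ)))
    (F : ℝ → ℝ)
    (hF : ∀ x, 0 < x → F x = ∫ t in Set.Ioi x, 1 / f t)
    (y : ℝ → ℝ)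
    (hy_cont : ContinuousOn y (Set.Ici 0))
    (hy_nonneg : ∀ t, 0 ≤ t → 0 ≤ y t)
    (g : ℝ → ℝ)
    (hg_nonneg : ∀ t, 0 ≤ t → 0 ≤ g t)
    (hg_loc : LocallyIntegrableOn g (Set.Ici 0))
    (y₀ : ℝ) (hy₀ : 0 < y₀)
    (hineq : ∀ t, 0 ≤ t →
      y t ≤ y₀ + (∫ s in (0:ℝ)..t, g s) + ∫ s in (0:ℝ)..t, f (y s)) :
    (∃! Tstar : ℝ, 0 < Tstar ∧ Tstar = F (y₀ + ∫ s in (0:ℝ)..Tstar, g s)) ∧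
    (∀ Tstar : ℝ, (0 < Tstar ∧ Tstar = F (y₀ + ∫ s in (0:ℝ)..Tstar, g s)) →
      ∀ T, 0 ≤ T → T < Tstar →
        ∀ z, 0 < z → F z = F (y₀ + ∫ s in (0:ℝ)..T, g s) - T →
          ∀ t, 0 ≤ t → t ≤ T → y t ≤ z) := by
  -- basic facts about 1/f and F
  have h1f_contOn : ∀ s : Set ℝ, s ⊆ Ioi 0 → ContinuousOn (fun x => 1 / f x) s := by
    intro s hs
    refine ContinuousOn.div continuousOn_const
      (hf_cont.mono (hs.trans Ioi_subset_Ici_self)) ?_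
    exact fun x hx => (hf_pos x (hs hx)).ne'
  have hf_int' : ∀ a : ℝ, 0 < a → IntegrableOn (fun x => 1 / f x) (Ioi a) := by
    intro a ha
    have h1 : IntegrableOn (fun x => 1 / f x) (Ioc a 1) := by
      rcases le_or_gt 1 a with h | h
      · rw [Ioc_eq_empty (by linarith)]; exact integrableOn_empty
      · exact ((h1f_contOn (Icc a 1) (fun x hx => lt_of_lt_of_le ha hx.1)).integrableOn_compact
          isCompact_Icc).mono_set Ioc_subset_Icc_self
    refine (h1.union hf_int).mono_set ?_
    intro x hx
    rcases le_or_gt x 1 with h | h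
    · exact Or.inl ⟨hx, h⟩
    · exact Or.inr h
  have hF_split : ∀ a b : ℝ, 0 < a → a ≤ b → F a = (∫ x in a..b, 1 / f x) + F b := by
    intro a b ha hab
    have hb : 0 < b := lt_of_lt_of_le ha hab
    rw [hF a ha, hF b hb, intervalIntegral.integral_of_le hab,
      ← setIntegral_union (Ioc_disjoint_Ioi le_rfl) measurableSet_Ioi
        ((hf_int' a ha).mono_set Ioc_subset_Ioi_self) (hf_int' b hb),
      Ioc_union_Ioi_eq_Ioi hab]
  have hF_pos : ∀ x : ℝ, 0 < x → 0 < F x := by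
    intro x hx
    have h1 : F x = (∫ t in x..(x+1), 1 / f t) + F (x+1) := hF_split x (x+1) hx (by linarith)
    have h2 : 0 < ∫ t in x..(x+1), 1 / f t := by
      refine intervalIntegral.intervalIntegral_pos_of_pos_on ?_ ?_ (by linarith)
      · exact ((h1f_contOn (uIcc x (x+1)) (fun u hu => lt_of_lt_of_le hx
          (by rw [uIcc_of_le (by linarith : x ≤ x+1)] at hu; exact hu.1))).intervalIntegrable)
      · intro u hu; exact div_pos one_pos (hf_pos u (lt_trans hx hu.1))
    have h3 : 0 ≤ F (x+1) := by
      rw [hF (x+1) (by linarith)]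
      refine setIntegral_nonneg measurableSet_Ioi fun t ht => ?_
      exact div_nonneg zero_le_one (hf_nonneg t (le_of_lt (lt_trans (by linarith) ht)))
    linarith
  have hF_anti : StrictAntiOn F (Ioi 0) := by
    intro a ha b hb hab
    have h1 : F a = (∫ t in a..b, 1 / f t) + F b := hF_split a b ha hab.le
    have h2 : 0 < ∫ t in a..b, 1 / f t := by
      refine intervalIntegral.intervalIntegral_pos_of_pos_on ?_ ?_ hab
      · exact ((h1f_contOn (uIcc a b) (fun u hu => lt_of_lt_of_le ha
          (by rw [uIcc_of_le hab.le] at hu; exact hu.1))).intervalIntegrable)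
      · intro u hu; exact div_pos one_pos (hf_pos u (lt_trans ha hu.1))
    linarith
  have hF_le : ∀ a b : ℝ, 0 < a → a ≤ b → F b ≤ F a := by
    intro a b ha hab
    rcases eq_or_lt_of_le hab with rfl | h
    · exact le_rfl
    · exact (hF_anti ha (lt_trans ha h) h).le
  have hF_deriv : ∀ x : ℝ, 0 < x → HasDerivAt F (-(1 / f x)) x := by
    intro x hx
    have ha : (0:ℝ) < x/2 := by linarith
    have hax : x/2 < x := by linarith
    have hii : IntervalIntegrable (fun t => 1 / f t) volume (x/2) x :=
      (h1f_contOn (uIcc (x/2) x) (fun u hu => lt_of_lt_of_le ha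
        (by rw [uIcc_of_le hax.le] at hu; exact hu.1))).intervalIntegrable
    have hmeas : StronglyMeasurableAtFilter (fun t => 1 / f t) (𝓝 x) :=
      (h1f_contOn (Ioi 0) le_rfl).stronglyMeasurableAtFilter isOpen_Ioi x hx
    have hca : ContinuousAt (fun t => 1 / f t) x :=
      (h1f_contOn (Ioi 0) le_rfl).continuousAt (Ioi_mem_nhds hx)
    have hmain : HasDerivAt (fun u => F (x/2) - ∫ t in (x/2)..u, 1 / f t) (-(1 / f x)) x :=
      (intervalIntegral.integral_hasDerivAt_right hii hmeas hca).const_sub (F (x/2))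
    refine hmain.congr_of_eventuallyEq ?_
    filter_upwards [Ioi_mem_nhds hax] with u hu
    have := hF_split (x/2) u ha (le_of_lt hu)
    linarith
  have hF_contAt : ∀ x : ℝ, 0 < x → ContinuousAt F x := fun x hx =>
    (hF_deriv x hx).continuousAt
  -- facts about the primitive of g
  have hg_ii : ∀ a b : ℝ, 0 ≤ a → a ≤ b → IntervalIntegrable g volume a b := by
    intro a b ha hab
    have : IntegrableOn g (Icc a b) :=
      hg_loc.integrableOn_compact_subset (fun x hx => le_trans ha hx.1) isCompact_Icc
    exact IntegrableOn.intervalIntegrable (by rwa [uIcc_of_le hab])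
  have hG_nonneg : ∀ T : ℝ, 0 ≤ T → 0 ≤ ∫ s in (0:ℝ)..T, g s := by
    intro T hT
    exact intervalIntegral.integral_nonneg hT fun s hs => hg_nonneg s hs.1
  have hG_mono : ∀ s T : ℝ, 0 ≤ s → s ≤ T → (∫ r in (0:ℝ)..s, g r) ≤ ∫ r in (0:ℝ)..T, g r := by
    intro s T hs hsT
    have h1 : (∫ r in (0:ℝ)..s, g r) + (∫ r in s..T, g r) = ∫ r in (0:ℝ)..T, g r :=
      intervalIntegral.integral_add_adjacent_intervals (hg_ii 0 s le_rfl hs) (hg_ii s T hs hsT)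
    have h2 : 0 ≤ ∫ r in s..T, g r :=
      intervalIntegral.integral_nonneg hsT fun r hr => hg_nonneg r (le_trans hs hr.1)
    linarith
  -- Part 1: existence and uniqueness of Tstar
  set φ : ℝ → ℝ := fun T => F (y₀ + ∫ s in (0:ℝ)..T, g s) - T with hφdef
  have hpos_arg : ∀ T : ℝ, 0 ≤ T → 0 < y₀ + ∫ s in (0:ℝ)..T, g s := by
    intro T hT; have := hG_nonneg T hT; linarith
  have hφ_anti : StrictAntiOn φ (Ici 0) := by
    intro a ha b hb hab
    have h1 : F (y₀ + ∫ s in (0:ℝ)..b, g s) ≤ F (y₀ + ∫ s in (0:ℝ)..a, g s) :=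
      hF_le _ _ (hpos_arg a ha) (by have := hG_mono a b ha hab.le; linarith)
    simp only [hφdef]
    linarith
  have hφ0 : φ 0 = F y₀ := by simp [hφdef]
  set M : ℝ := F y₀ + 1 with hM
  have hM0 : (0:ℝ) ≤ M := by have := hF_pos y₀ hy₀; linarith
  have hφM : φ M < 0 := by
    have h1 : F (y₀ + ∫ s in (0:ℝ)..M, g s) ≤ F y₀ :=
      hF_le _ _ hy₀ (by have := hG_nonneg M hM0; linarith)
    simp only [hφdef]; linarith
  have hφ_cont : ContinuousOn φ (Icc 0 M) := by
    have hGc : ContinuousOn (fun T => ∫ s in (0:ℝ)..T, g s) (Icc 0 M) := by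
      have := intervalIntegral.continuousOn_primitive_interval'
        (hg_ii 0 M le_rfl hM0) (left_mem_uIcc (a := (0:ℝ)) (b := M))
      rwa [uIcc_of_le hM0] at this
    refine ContinuousOn.sub ?_ continuousOn_id
    intro T hT
    have h1 : ContinuousWithinAt (fun T => y₀ + ∫ s in (0:ℝ)..T, g s) (Icc 0 M) T :=
      (continuousOn_const.add hGc) T hT
    have h2 : ContinuousWithinAt (F ∘ fun T => y₀ + ∫ s in (0:ℝ)..T, g s) (Icc 0 M) T :=
      ContinuousWithinAt.comp ((hF_contAt _ (hpos_arg T hT.1)).continuousWithinAt) h1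
        (mapsTo_univ _ _)
    exact h2
  obtain ⟨Ts, hTs_mem, hTs⟩ : ∃ Ts ∈ Icc (0:ℝ) M, φ Ts = 0 := by
    have h0 : (0:ℝ) ∈ Icc (φ M) (φ 0) := ⟨hφM.le, by rw [hφ0]; exact (hF_pos y₀ hy₀).le⟩
    obtain ⟨Ts, hTs_mem, hTs⟩ := intermediate_value_Icc' hM0 hφ_cont h0
    exact ⟨Ts, hTs_mem, hTs⟩
  have hTs_pos : 0 < Ts := by
    rcases eq_or_lt_of_le hTs_mem.1 with h | h
    · exfalso; rw [← h] at hTs; rw [hφ0] at hTs; exact (hF_pos y₀ hy₀).ne' hTs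
    · exact h
  have huniq : ∀ T' : ℝ, (0 < T' ∧ T' = F (y₀ + ∫ s in (0:ℝ)..T', g s)) → T' = Ts := by
    intro T' ⟨hT'pos, hT'eq⟩
    have hφT' : φ T' = 0 := by simp only [hφdef]; linarith
    exact hφ_anti.injOn hT'pos.le hTs_mem.1 (by rw [hφT', hTs])
  refine ⟨⟨Ts, ⟨hTs_pos, by simp only [hφdef] at hTs; linarith⟩, huniq⟩, ?_⟩
  -- Part 2: the bound
  intro Tstar _ T hT0 _ z hz hFz t ht0 htT
  set A : ℝ := y₀ + ∫ s in (0:ℝ)..T, g s with hA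
  have hA_pos : 0 < A := hpos_arg T hT0
  have hfy_cont : ContinuousOn (fun r => f (y r)) (Ici 0) :=
    hf_cont.comp hy_cont fun r hr => hy_nonneg r hr
  have hfy_ii : ∀ a b : ℝ, 0 ≤ a → a ≤ b → IntervalIntegrable (fun r => f (y r)) volume a b := by
    intro a b ha hab
    exact (hfy_cont.mono (by rw [uIcc_of_le hab]; exact fun x hx => le_trans ha hx.1)).intervalIntegrable
  set w : ℝ → ℝ := fun s => A + ∫ r in (0:ℝ)..s, f (y r) with hw
  have hw_ge : ∀ s : ℝ, 0 ≤ s → A ≤ w s := by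
    intro s hs
    have : 0 ≤ ∫ r in (0:ℝ)..s, f (y r) :=
      intervalIntegral.integral_nonneg hs fun r hr => hf_nonneg _ (hy_nonneg r hr.1)
    simp only [hw]; linarith
  have hw_pos : ∀ s : ℝ, 0 ≤ s → 0 < w s := fun s hs => lt_of_lt_of_le hA_pos (hw_ge s hs)
  have hyw : ∀ s : ℝ, 0 ≤ s → s ≤ T → y s ≤ w s := by
    intro s hs hsT
    have h1 := hineq s hs
    have h2 := hG_mono s T hs hsT
    simp only [hw, hA]; linarith
  -- w is continuous on [0, t]
  have hw_cont : ContinuousOn w (Icc 0 t) := by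
    have := intervalIntegral.continuousOn_primitive_interval'
      (hfy_ii 0 t le_rfl ht0) (left_mem_uIcc (a := (0:ℝ)) (b := t))
    rw [uIcc_of_le ht0] at this
    exact continuousOn_const.add this
  -- the function H s = F (w s) + s is monotone on [0, t]
  have hH_mono : MonotoneOn (fun s => F (w s) + s) (Icc 0 t) := by
    refine monotoneOn_of_hasDerivWithinAt_nonneg (convex_Icc 0 t)
      ?_ (f' := fun s => -(1 / f (w s)) * f (y s) + 1) ?_ ?_
    · refine ContinuousOn.add ?_ continuousOn_id
      intro s hs
      have h2 : ContinuousWithinAt (F ∘ w) (Icc 0 t) s :=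
        ContinuousWithinAt.comp ((hF_contAt _ (hw_pos s hs.1)).continuousWithinAt)
          (hw_cont s hs) (mapsTo_univ _ _)
      exact h2
    · rw [interior_Icc]
      intro s hs
      have hs0 : 0 < s := hs.1
      have hw' : HasDerivAt w (f (y s)) s := by
        have hmeas : StronglyMeasurableAtFilter (fun r => f (y r)) (𝓝 s) :=
          (hfy_cont.mono Ioi_subset_Ici_self).stronglyMeasurableAtFilter isOpen_Ioi s hs0
        have hca : ContinuousAt (fun r => f (y r)) s :=
          hfy_cont.continuousAt (Ici_mem_nhds hs0)
        exact (intervalIntegral.integral_hasDerivAt_right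
          (hfy_ii 0 s le_rfl hs0.le) hmeas hca).const_add A
      have hF' : HasDerivAt F (-(1 / f (w s))) (w s) := hF_deriv (w s) (hw_pos s hs0.le)
      exact ((hF'.comp s hw').add (hasDerivAt_id s)).hasDerivWithinAt
    · rw [interior_Icc]
      intro s hs
      have hs0 : (0:ℝ) ≤ s := hs.1.le
      have hfw_pos : 0 < f (w s) := hf_pos _ (hw_pos s hs0)
      have hle : f (y s) ≤ f (w s) :=
        hf_mono (hy_nonneg s hs0) (hw_pos s hs0).le (hyw s hs0 (le_trans hs.2.le htT))
      have : f (y s) / f (w s) ≤ 1 := (div_le_one hfw_pos).mpr hle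
      show 0 ≤ -(1 / f (w s)) * f (y s) + 1
      have heq : -(1 / f (w s)) * f (y s) = -(f (y s) / f (w s)) := by ring
      rw [heq]; linarith
  -- conclude
  have hH : F (w 0) + 0 ≤ F (w t) + t :=
    hH_mono ⟨le_rfl, ht0⟩ ⟨ht0, le_rfl⟩ ht0
  have hw0 : w 0 = A := by simp [hw]
  have hFwt : F z ≤ F (w t) := by
    rw [hFz]
    rw [hw0] at hH
    have : F A ≤ F (w t) + t := by linarith
    linarith
  have hwz : w t ≤ z := by
    by_contra h
    push_neg at h
    exact absurd (hF_anti hz (lt_trans hz h) h) (not_lt.mpr hFwt)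
  exact le_trans (hyw t ht0 htT) hwz
end

section
/- Let E₀ ≥ 0, B ≥ 0, C > 0 and T > 0 satisfy 1 − C·E₀·T − C·B·T² > 0. If y : [0,T] → [0,∞) is continuous and satisfies y(t) ≤ E₀ + B·t + C·∫₀ᵗ y(s)² ds for all t ∈ [0,T], then sup_{t ∈ [0,T]} y(t) ≤ (E₀ + B·T)/(1 − C·E₀·T − C·B·T²). -/
open MeasureTheory Set

/-- Key bootstrap lemma: if `y t ≤ A + C ∫₀ᵗ y²` on `[0,T]` and `a > A ≥ 0` with
`1 - C a T > 0`, then `y t < a / (1 - C a t)` on `[0,T]`. -/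
lemma bihari_quadratic_aux
    (A a C T : ℝ) (hA : 0 ≤ A) (hC : 0 < C) (hT : 0 < T)
    (haA : A < a) (hden : 0 < 1 - C * a * T)
    (y : ℝ → ℝ)
    (hy_cont : ContinuousOn y (Set.Icc 0 T))
    (hy_nonneg : ∀ t ∈ Set.Icc (0:ℝ) T, 0 ≤ y t)
    (hineq : ∀ t ∈ Set.Icc (0:ℝ) T,
      y t ≤ A + C * ∫ s in (0:ℝ)..t, (y s) ^ 2) :
    ∀ t ∈ Set.Icc (0:ℝ) T, y t < a / (1 - C * a * t) := by
  have ha : 0 < a := lt_of_le_of_lt hA haA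
  -- denominator positivity on [0,T]
  have hden' : ∀ s ∈ Set.Icc (0:ℝ) T, 0 < 1 - C * a * s := by
    intro s hs
    have : C * a * s ≤ C * a * T :=
      mul_le_mul_of_nonneg_left hs.2 (le_of_lt (mul_pos hC ha))
    linarith
  set φ : ℝ → ℝ := fun s => a / (1 - C * a * s) with hφdef
  have hφ_cont : ContinuousOn φ (Set.Icc 0 T) := by
    apply ContinuousOn.div continuousOn_const
    · exact (continuousOn_const.sub (continuousOn_const.mul continuousOn_id))
    · intro s hs; exact ne_of_gt (hden' s hs)
  by_contra hcon
  push_neg at hcon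
  obtain ⟨t₁, ht₁, ht₁'⟩ := hcon
  -- the set where the bound fails
  set S : Set ℝ := {t ∈ Set.Icc (0:ℝ) T | φ t ≤ y t} with hSdef
  have hS_closed : IsClosed S := by
    have : S = Set.Icc (0:ℝ) T ∩ (fun t => y t - φ t) ⁻¹' Set.Ici 0 := by
      ext t; simp [hSdef, sub_nonneg, and_comm]
    rw [this]
    exact ContinuousOn.preimage_isClosed_of_isClosed (hy_cont.sub hφ_cont)
      isClosed_Icc isClosed_Ici
  have hS_ne : S.Nonempty := ⟨t₁, ht₁, ht₁'⟩
  have hS_bdd : BddBelow S := ⟨0, fun t ht => ht.1.1⟩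
  set t₀ := sInf S with ht₀def
  have ht₀S : t₀ ∈ S := hS_closed.csInf_mem hS_ne hS_bdd
  have ht₀mem : t₀ ∈ Set.Icc (0:ℝ) T := ht₀S.1
  have ht₀le : φ t₀ ≤ y t₀ := ht₀S.2
  -- y s < φ s for s < t₀
  have hlt : ∀ s ∈ Set.Ico (0:ℝ) t₀, y s < φ s := by
    intro s hs
    by_contra h
    push_neg at h
    have hsS : s ∈ S := ⟨⟨hs.1, le_trans (le_of_lt hs.2) ht₀mem.2⟩, h⟩
    exact absurd (csInf_le hS_bdd hsS) (not_le.2 hs.2)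
  -- integrability
  have hsub : Set.uIcc (0:ℝ) t₀ ⊆ Set.Icc 0 T := by
    rw [Set.uIcc_of_le ht₀mem.1]
    exact Set.Icc_subset_Icc le_rfl ht₀mem.2
  have hy2_int : IntervalIntegrable (fun s => y s ^ 2) volume 0 t₀ :=
    ((hy_cont.mono hsub).pow 2).intervalIntegrable
  have hφ2_int : IntervalIntegrable (fun s => φ s ^ 2) volume 0 t₀ :=
    ((hφ_cont.mono hsub).pow 2).intervalIntegrable
  -- a.e. comparison on [0,t₀]
  have hae : (fun s => y s ^ 2) ≤ᵐ[volume.restrict (Set.Icc 0 t₀)] fun s => φ s ^ 2 := by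
    have hne : ∀ᵐ s ∂(volume.restrict (Set.Icc 0 t₀)), s ≠ t₀ :=
      ae_restrict_of_ae (by
        have h0 : (volume : Measure ℝ) {t₀} = 0 := measure_singleton t₀
        rw [MeasureTheory.ae_iff]
        have : {s : ℝ | ¬ s ≠ t₀} = {t₀} := by ext s; simp
        rw [this]; exact h0)
    filter_upwards [hne, ae_restrict_mem measurableSet_Icc] with s hs hs'
    have hslt : s ∈ Set.Ico (0:ℝ) t₀ := ⟨hs'.1, lt_of_le_of_ne hs'.2 hs⟩
    have h1 : y s < φ s := hlt s hslt
    have h0 : 0 ≤ φ s := le_of_lt (div_pos ha (hden' s ⟨hs'.1, le_trans hs'.2 ht₀mem.2⟩))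
    have hy0 : 0 ≤ y s := hy_nonneg s ⟨hs'.1, le_trans hs'.2 ht₀mem.2⟩
    nlinarith
  have hint_mono : (∫ s in (0:ℝ)..t₀, y s ^ 2) ≤ ∫ s in (0:ℝ)..t₀, φ s ^ 2 :=
    intervalIntegral.integral_mono_ae_restrict ht₀mem.1 hy2_int hφ2_int hae
  -- compute ∫₀^{t₀} C φ² = φ t₀ - a, i.e. ∫ φ² = (φ t₀ - a)/C — better: compute C * ∫ φ².
  have hcalc : (∫ s in (0:ℝ)..t₀, C * a ^ 2 / (1 - C * a * s) ^ 2) = φ t₀ - a := by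
    have hderiv : ∀ s ∈ Set.uIcc (0:ℝ) t₀,
        HasDerivAt φ (C * a ^ 2 / (1 - C * a * s) ^ 2) s := by
      intro s hs
      have hsne : (1 - C * a * s) ≠ 0 := ne_of_gt (hden' s (hsub hs))
      have h1 : HasDerivAt (fun s : ℝ => 1 - C * a * s) (-(C * a)) s := by
        simpa using ((hasDerivAt_id s).const_mul (C * a)).const_sub 1
      have h2 : HasDerivAt (fun y => a * (1 - C * a * y)⁻¹) (a * (- -(C * a) / (1 - C * a * s) ^ 2)) s :=
        (h1.inv hsne).const_mul a
      convert h2 using 1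
      · ext x; simp only [hφdef, div_eq_mul_inv]
      · field_simp
    have hcont : ContinuousOn (fun s => C * a ^ 2 / (1 - C * a * s) ^ 2) (Set.uIcc 0 t₀) := by
      apply ContinuousOn.div continuousOn_const
      · exact ((continuousOn_const.sub (continuousOn_const.mul continuousOn_id)).pow 2)
      · intro s hs; exact pow_ne_zero 2 (ne_of_gt (hden' s (hsub hs)))
    rw [intervalIntegral.integral_eq_sub_of_hasDerivAt hderiv
      (hcont.intervalIntegrable)]
    simp [hφdef]
  have hφ2eq : ∀ s ∈ Set.uIcc (0:ℝ) t₀, C * φ s ^ 2 = C * a ^ 2 / (1 - C * a * s) ^ 2 := by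
    intro s hs
    have hsne : (1 - C * a * s) ≠ 0 := ne_of_gt (hden' s (hsub hs))
    simp only [hφdef]
    field_simp
  have hCint : C * (∫ s in (0:ℝ)..t₀, φ s ^ 2) = φ t₀ - a := by
    rw [← hcalc, ← intervalIntegral.integral_const_mul]
    apply intervalIntegral.integral_congr
    intro s hs
    exact hφ2eq s hs
  -- final contradiction
  have hy0 : y t₀ ≤ A + C * ∫ s in (0:ℝ)..t₀, y s ^ 2 := hineq t₀ ht₀mem
  have : y t₀ ≤ A + C * ∫ s in (0:ℝ)..t₀, φ s ^ 2 := by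
    have := mul_le_mul_of_nonneg_left hint_mono (le_of_lt hC)
    linarith
  rw [hCint] at this
  linarith

/-- Quadratic-nonlinearity case of Bihari's inequality: if
`y t ≤ E₀ + B t + C ∫₀ᵗ y(s)² ds` on `[0,T]` with `1 - C E₀ T - C B T² > 0`, then
`sup_{[0,T]} y ≤ (E₀ + B T) / (1 - C E₀ T - C B T²)`. -/
theorem bihari_quadratic
    (E₀ B C T : ℝ) (hE₀ : 0 ≤ E₀) (hB : 0 ≤ B) (hC : 0 < C) (hT : 0 < T)
    (hden : 0 < 1 - C * E₀ * T - C * B * T ^ 2)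
    (y : ℝ → ℝ)
    (hy_cont : ContinuousOn y (Set.Icc 0 T))
    (hy_nonneg : ∀ t ∈ Set.Icc (0:ℝ) T, 0 ≤ y t)
    (hineq : ∀ t ∈ Set.Icc (0:ℝ) T,
      y t ≤ E₀ + B * t + C * ∫ s in (0:ℝ)..t, (y s) ^ 2) :
    ∀ t ∈ Set.Icc (0:ℝ) T,
      y t ≤ (E₀ + B * T) / (1 - C * E₀ * T - C * B * T ^ 2) := by
  set A := E₀ + B * T with hA
  have hA0 : 0 ≤ A := by positivity
  have hdenA : 0 < 1 - C * A * T := by rw [hA]; nlinarith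
  have hineq' : ∀ t ∈ Set.Icc (0:ℝ) T, y t ≤ A + C * ∫ s in (0:ℝ)..t, (y s) ^ 2 := by
    intro t ht
    have := hineq t ht
    have : B * t ≤ B * T := mul_le_mul_of_nonneg_left ht.2 hB
    have h2 := hineq t ht
    rw [hA]; linarith
  intro t ht
  have hgoal_eq : (E₀ + B * T) / (1 - C * E₀ * T - C * B * T ^ 2) = A / (1 - C * A * T) := by
    rw [hA]; ring_nf
  rw [hgoal_eq]
  by_contra hcon
  push_neg at hcon
  -- choose a slightly above A
  have hcont : ContinuousAt (fun a => a / (1 - C * a * T)) A :=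
    ContinuousAt.div (by fun_prop) (by fun_prop) (ne_of_gt hdenA)
  have hev : ∀ᶠ a in nhds A, (a / (1 - C * a * T)) < y t ∧ 0 < 1 - C * a * T := by
    have h1 : ∀ᶠ a in nhds A, (a / (1 - C * a * T)) < y t :=
      hcont.eventually_lt_const hcon
    have hcont2 : ContinuousAt (fun a => 1 - C * a * T) A := by fun_prop
    have h2 : ∀ᶠ a in nhds A, 0 < 1 - C * a * T :=
      hcont2.eventually_const_lt hdenA
    exact h1.and h2
  have hev' : ∀ᶠ a in nhdsWithin A (Set.Ioi A),
      (a / (1 - C * a * T)) < y t ∧ 0 < 1 - C * a * T :=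
    hev.filter_mono nhdsWithin_le_nhds
  obtain ⟨a, ⟨hlt, hdena⟩, haA⟩ := (hev'.and self_mem_nhdsWithin).exists
  have key := bihari_quadratic_aux A a C T hA0 hC hT haA hdena y hy_cont hy_nonneg hineq' t ht
  -- φ t ≤ a / (1 - C a T)
  have hmono : a / (1 - C * a * t) ≤ a / (1 - C * a * T) := by
    apply div_le_div_of_nonneg_left (le_trans hA0 (le_of_lt haA)) hdena
    have : C * a * t ≤ C * a * T := by
      exact mul_le_mul_of_nonneg_left ht.2 (mul_nonneg hC.le (le_trans hA0 haA.le))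
    linarith
  linarith
end

section
/- For every ε ∈ (0, 1 − √(1 − λ₂/λ₁)) and every s ∈ (−1, 1), F_ε(s) ≤ F(s); equivalently, G_ε(s) ≤ G(s) for all s ∈ (−1, 1). -/
/-- The logarithmic part `G(s) = (λ₂/2)[(1+s)ln((1+s)/2) + (1−s)ln((1−s)/2)]`. -/
noncomputable def Glog (l2 s : ℝ) : ℝ :=
  l2 / 2 * ((1 + s) * Real.log ((1 + s) / 2) + (1 - s) * Real.log ((1 - s) / 2))

/-- Its first derivative `G'(s) = (λ₂/2)ln((1+s)/(1−s))` on `(−1,1)`. -/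
noncomputable def GlogD (l2 s : ℝ) : ℝ :=
  l2 / 2 * Real.log ((1 + s) / (1 - s))

/-- Its second derivative `G''(s) = λ₂/(1−s²)` on `(−1,1)`. -/
noncomputable def GlogDD (l2 s : ℝ) : ℝ :=
  l2 / (1 - s ^ 2)

/-- The regularization `G_ε` of `G`: the second-order Taylor polynomial of `G` at
`1−ε` (resp. `−1+ε`) for `s ≥ 1−ε` (resp. `s ≤ −1+ε`), and `G` itself in between. -/
noncomputable def Geps (l2 ε s : ℝ) : ℝ :=
  if 1 - ε ≤ s then
    Glog l2 (1 - ε) + GlogD l2 (1 - ε) * (s - (1 - ε))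
      + GlogDD l2 (1 - ε) / 2 * (s - (1 - ε)) ^ 2
  else if s ≤ -1 + ε then
    Glog l2 (-1 + ε) + GlogD l2 (-1 + ε) * (s - (-1 + ε))
      + GlogDD l2 (-1 + ε) / 2 * (s - (-1 + ε)) ^ 2
  else Glog l2 s

/-- The logarithmic potential `F(s) = (λ₁/2)(1 − s²) + G(s)`. -/
noncomputable def Flog (l1 l2 s : ℝ) : ℝ :=
  l1 / 2 * (1 - s ^ 2) + Glog l2 s

/-- The regularized potential `F_ε(s) = (λ₁/2)(1 − s²) + G_ε(s)`. -/
noncomputable def Feps (l1 l2 ε s : ℝ) : ℝ :=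
  l1 / 2 * (1 - s ^ 2) + Geps l2 ε s

lemma glog_hasDerivAt (l2 s : ℝ) (h1 : -1 < s) (h2 : s < 1) :
    HasDerivAt (Glog l2) (GlogD l2 s) s := by
  have hp : (0:ℝ) < 1 + s := by linarith
  have hm : (0:ℝ) < 1 - s := by linarith
  have d1 : HasDerivAt (fun t : ℝ => 1 + t) 1 s := (hasDerivAt_id s).const_add 1
  have d1' : HasDerivAt (fun t : ℝ => 1 - t) (-1) s := by
    simpa using (hasDerivAt_id s).const_sub 1
  have dA : HasDerivAt (fun t : ℝ => (1 + t) * Real.log ((1 + t) / 2))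
      (Real.log ((1 + s) / 2) + 1) s := by
    have dlog : HasDerivAt (fun t : ℝ => Real.log ((1 + t) / 2))
        ((1 / 2) / ((1 + s) / 2)) s := (d1.div_const 2).log (by positivity)
    have := d1.mul dlog
    refine this.congr_deriv ?_
    symm
    field_simp
  have dB : HasDerivAt (fun t : ℝ => (1 - t) * Real.log ((1 - t) / 2))
      (-(Real.log ((1 - s) / 2)) - 1) s := by
    have dlog : HasDerivAt (fun t : ℝ => Real.log ((1 - t) / 2))
        ((-1 / 2) / ((1 - s) / 2)) s := (d1'.div_const 2).log (by positivity)
    have := d1'.mul dlog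
    refine this.congr_deriv ?_
    symm
    field_simp
    ring
  have := (dA.add dB).const_mul (l2 / 2)
  refine this.congr_deriv ?_
  symm
  unfold GlogD
  rw [Real.log_div hp.ne' hm.ne', Real.log_div hp.ne' two_ne_zero,
    Real.log_div hm.ne' two_ne_zero]
  ring

lemma glogD_hasDerivAt (l2 s : ℝ) (h1 : -1 < s) (h2 : s < 1) :
    HasDerivAt (GlogD l2) (GlogDD l2 s) s := by
  have hp : (0:ℝ) < 1 + s := by linarith
  have hm : (0:ℝ) < 1 - s := by linarith
  have d1 : HasDerivAt (fun t : ℝ => 1 + t) 1 s := (hasDerivAt_id s).const_add 1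
  have d1' : HasDerivAt (fun t : ℝ => 1 - t) (-1) s := by
    simpa using (hasDerivAt_id s).const_sub 1
  have dq : HasDerivAt (fun t : ℝ => (1 + t) / (1 - t))
      ((1 * (1 - s) - (1 + s) * (-1)) / (1 - s) ^ 2) s := d1.div d1' hm.ne'
  have dlog : HasDerivAt (fun t : ℝ => Real.log ((1 + t) / (1 - t)))
      (((1 * (1 - s) - (1 + s) * (-1)) / (1 - s) ^ 2) / ((1 + s) / (1 - s))) s :=
    dq.log (by positivity)
  have := dlog.const_mul (l2 / 2)
  refine this.congr_deriv ?_
  symm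
  unfold GlogDD
  rw [show (1:ℝ) - s ^ 2 = (1 - s) * (1 + s) by ring]
  field_simp
  ring

/-- The second-order Taylor polynomial of `G` at `a ∈ (0,1)` lies below `G`
on `[a, 1)`. -/
lemma taylor_le_right (l2 : ℝ) (hl2 : 0 < l2) (a : ℝ) (ha0 : 0 < a) (ha1 : a < 1)
    (s : ℝ) (has : a ≤ s) (hs1 : s < 1) :
    Glog l2 a + GlogD l2 a * (s - a) + GlogDD l2 a / 2 * (s - a) ^ 2 ≤ Glog l2 s := by
  set P' : ℝ → ℝ := fun t => GlogD l2 t - GlogD l2 a - GlogDD l2 a * (t - a) with hP'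
  have hsub : Set.Ico a 1 ⊆ Set.Ioo (-1 : ℝ) 1 := fun t ht =>
    ⟨by linarith [ht.1], ht.2⟩
  have hP'deriv : ∀ t ∈ Set.Ioo (-1 : ℝ) 1,
      HasDerivAt P' (GlogDD l2 t - GlogDD l2 a) t := by
    intro t ht
    have h1 := (glogD_hasDerivAt l2 t ht.1 ht.2).sub_const (GlogD l2 a)
    have h2 := ((hasDerivAt_id t).sub_const a).const_mul (GlogDD l2 a)
    have := h1.sub h2
    refine this.congr_deriv ?_
    symm
    ring
  have hP'mono : MonotoneOn P' (Set.Ico a 1) := by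
    apply monotoneOn_of_deriv_nonneg (convex_Ico a 1)
    · intro t ht
      exact (hP'deriv t (hsub ht)).differentiableAt.continuousAt.continuousWithinAt
    · intro t ht
      rw [interior_Ico] at ht
      exact (hP'deriv t (hsub (Set.Ioo_subset_Ico_self ht))).differentiableAt.differentiableWithinAt
    · intro t ht
      rw [interior_Ico] at ht
      rw [(hP'deriv t (hsub (Set.Ioo_subset_Ico_self ht))).deriv]
      have hta : a < t := ht.1
      have ht1 : t < 1 := ht.2
      have hsq : a ^ 2 < t ^ 2 := by nlinarith
      have h1t : (0:ℝ) < 1 - t ^ 2 := by nlinarith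
      have h1a : (0:ℝ) < 1 - a ^ 2 := by nlinarith
      have : l2 / (1 - a ^ 2) ≤ l2 / (1 - t ^ 2) :=
        div_le_div_of_nonneg_left hl2.le h1t (by nlinarith)
      simpa [GlogDD] using sub_nonneg.mpr this
  have hP'a : P' a = 0 := by simp [hP']
  have hP'nonneg : ∀ t ∈ Set.Ico a 1, 0 ≤ P' t := by
    intro t ht
    have := hP'mono (Set.left_mem_Ico.mpr ha1) ht ht.1
    rwa [hP'a] at this
  set H : ℝ → ℝ := fun t =>
    Glog l2 t - (Glog l2 a + GlogD l2 a * (t - a) + GlogDD l2 a / 2 * (t - a) ^ 2)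
    with hH
  have hHderiv : ∀ t ∈ Set.Ioo (-1 : ℝ) 1, HasDerivAt H (P' t) t := by
    intro t ht
    have h1 := glog_hasDerivAt l2 t ht.1 ht.2
    have h2 : HasDerivAt (fun t : ℝ =>
        Glog l2 a + GlogD l2 a * (t - a) + GlogDD l2 a / 2 * (t - a) ^ 2)
        (GlogD l2 a + GlogDD l2 a * (t - a)) t := by
      have d1 := (((hasDerivAt_id t).sub_const a).const_mul (GlogD l2 a)).const_add
        (Glog l2 a)
      have d2 := (((hasDerivAt_id t).sub_const a).pow 2).const_mul (GlogDD l2 a / 2)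
      have := d1.add d2
      refine this.congr_deriv ?_
      symm
      simp only [id_eq]
      ring
    have := h1.sub h2
    refine this.congr_deriv ?_
    symm
    simp [hP']
    ring
  have hHmono : MonotoneOn H (Set.Ico a 1) := by
    apply monotoneOn_of_deriv_nonneg (convex_Ico a 1)
    · intro t ht
      exact (hHderiv t (hsub ht)).differentiableAt.continuousAt.continuousWithinAt
    · intro t ht
      rw [interior_Ico] at ht
      exact (hHderiv t (hsub (Set.Ioo_subset_Ico_self ht))).differentiableAt.differentiableWithinAt
    · intro t ht
      rw [interior_Ico] at ht
      rw [(hHderiv t (hsub (Set.Ioo_subset_Ico_self ht))).deriv]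
      exact hP'nonneg t (Set.Ioo_subset_Ico_self ht)
  have hHa : H a = 0 := by simp [hH]
  have := hHmono (Set.left_mem_Ico.mpr ha1) ⟨has, hs1⟩ has
  rw [hHa] at this
  simp only [hH] at this
  linarith

lemma Glog_neg (l2 s : ℝ) : Glog l2 (-s) = Glog l2 s := by
  unfold Glog
  rw [show (1 + -s) = 1 - s by ring, show (1 - -s) = 1 + s by ring]
  ring

lemma GlogD_neg (l2 s : ℝ) : GlogD l2 (-s) = -GlogD l2 s := by
  unfold GlogD
  rw [show (1 + -s) = 1 - s by ring, show (1 - -s) = 1 + s by ring,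
    show (1 - s) / (1 + s) = ((1 + s) / (1 - s))⁻¹ by rw [inv_div], Real.log_inv]
  ring

lemma GlogDD_neg (l2 s : ℝ) : GlogDD l2 (-s) = GlogDD l2 s := by
  unfold GlogDD; ring_nf

/-- The second-order Taylor polynomial of `G` at `-a`, `a ∈ (0,1)`, lies below `G`
on `(-1, -a]`. -/
lemma taylor_le_left (l2 : ℝ) (hl2 : 0 < l2) (a : ℝ) (ha0 : 0 < a) (ha1 : a < 1)
    (s : ℝ) (has : s ≤ -a) (hs1 : -1 < s) :
    Glog l2 (-a) + GlogD l2 (-a) * (s - -a) + GlogDD l2 (-a) / 2 * (s - -a) ^ 2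
      ≤ Glog l2 s := by
  have key := taylor_le_right l2 hl2 a ha0 ha1 (-s) (by linarith) (by linarith)
  rw [Glog_neg] at key
  calc Glog l2 (-a) + GlogD l2 (-a) * (s - -a) + GlogDD l2 (-a) / 2 * (s - -a) ^ 2
      = Glog l2 a + GlogD l2 a * (-s - a) + GlogDD l2 a / 2 * (-s - a) ^ 2 := by
        rw [Glog_neg, GlogD_neg, GlogDD_neg]; ring
    _ ≤ Glog l2 s := key

/-- For every `ε ∈ (0, 1 − √(1 − λ₂/λ₁))` and every `s ∈ (−1,1)`, `F_ε(s) ≤ F(s)`;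
equivalently `G_ε(s) ≤ G(s)`. -/
theorem Feps_le_Flog (l1 l2 : ℝ) (hl2 : 0 < l2) (hl : l2 < l1)
    (ε : ℝ) (hε : ε ∈ Set.Ioo 0 (1 - Real.sqrt (1 - l2 / l1))) :
    ∀ s ∈ Set.Ioo (-1 : ℝ) 1,
      Feps l1 l2 ε s ≤ Flog l1 l2 s ∧ Geps l2 ε s ≤ Glog l2 s := by
  have hε0 : 0 < ε := hε.1
  have hε1 : ε < 1 := lt_of_lt_of_le hε.2 (by
    have := Real.sqrt_nonneg (1 - l2 / l1); linarith)
  intro s hs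
  have hG : Geps l2 ε s ≤ Glog l2 s := by
    unfold Geps
    split_ifs with h1 h2
    · exact taylor_le_right l2 hl2 (1 - ε) (by linarith) (by linarith) s h1 hs.2
    · have := taylor_le_left l2 hl2 (1 - ε) (by linarith) (by linarith) s
        (by linarith) hs.1
      simpa [show -(1 - ε) = -1 + ε by ring] using this
    · exact le_refl _
  exact ⟨by unfold Feps Flog; linarith, hG⟩
end
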